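/- Let σ ≥ 0, set ζ_σ = (σ/B)^{(m−2)/m}, and let v = v_σ be the regular solution. Then exactly one of the following holds: v(ζ) → +∞, v(ζ) → 0, or v(ζ) → −∞ as ζ → +∞. Moreover: (1) if there exists ζ₁ ≥ ζ_σ with v(ζ₁) > 0 and v'(ζ₁) ≥ 0, then v(ζ) ≥ v(ζ₁) > 0 for all ζ ≥ ζ₁ and v(ζ) → +∞ as ζ → +∞; (2) if there exists ζ₁ ≥ ζ_σ with v(ζ₁) < 0 and v'(ζ₁) ≤ 0, then v(ζ) ≤ v(ζ₁) < 0 for all ζ ≥ ζ₁ and v(ζ) → −∞ as ζ → +∞. -/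

import Mathlib

open Filter Set

/-- A regular solution of the singular ODE
`-ζ·v'' - v'/(m-2) + B·ζ^{m/(m-2)}·v = σ·v` on `(0,∞)`:
continuously differentiable on `[0,∞)`, twice continuously differentiable on
`(0,∞)`, and normalized by `v 0 = 1`. -/
def RegSol (m B σ : ℝ) (v : ℝ → ℝ) : Prop :=
  ContDiffOn ℝ 1 v (Set.Ici 0) ∧
  ContDiffOn ℝ 2 v (Set.Ioi 0) ∧
  (∀ ζ : ℝ, 0 < ζ →
    -ζ * deriv (deriv v) ζ - deriv v ζ / (m - 2)
      + B * ζ ^ (m / (m - 2)) * v ζ = σ * v ζ) ∧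
  v 0 = 1
def Sol (m B σ : ℝ) (v : ℝ → ℝ) : Prop :=
  ContDiffOn ℝ 1 v (Set.Ici 0) ∧
  ContDiffOn ℝ 2 v (Set.Ioi 0) ∧
  (∀ ζ : ℝ, 0 < ζ →
    -ζ * deriv (deriv v) ζ - deriv v ζ / (m - 2)
      + B * ζ ^ (m / (m - 2)) * v ζ = σ * v ζ)

noncomputable def W (m : ℝ) (v : ℝ → ℝ) (ζ : ℝ) : ℝ := ζ ^ (m-2)⁻¹ * deriv v ζ

variable {m B σ : ℝ} {v : ℝ → ℝ}

lemma sol_diffDeriv (h : Sol m B σ v) {ζ : ℝ} (hζ : 0 < ζ) :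
    HasDerivAt (deriv v) (deriv (deriv v) ζ) ζ := by
  have : ContDiffOn ℝ 1 (deriv v) (Set.Ioi 0) :=
    ContDiffOn.deriv_of_isOpen (m := 1) h.2.1 isOpen_Ioi (by norm_num)
  exact ((this.contDiffAt (Ioi_mem_nhds hζ)).differentiableAt (by norm_num)).hasDerivAt

lemma sol_diff (h : Sol m B σ v) {ζ : ℝ} (hζ : 0 < ζ) :
    HasDerivAt v (deriv v ζ) ζ :=
  ((h.2.1.contDiffAt (Ioi_mem_nhds hζ)).differentiableAt (by norm_num)).hasDerivAt

lemma sol_contDeriv (h : Sol m B σ v) : ContinuousOn (deriv v) (Set.Ioi 0) :=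
  (ContDiffOn.deriv_of_isOpen (m := 1) h.2.1 isOpen_Ioi (by norm_num)).continuousOn

lemma sol_neg (h : Sol m B σ v) : Sol m B σ (fun ζ => -v ζ) := by
  obtain ⟨h1, h2, h3⟩ := h
  refine ⟨h1.neg, h2.neg, fun ζ hζ => ?_⟩
  have hd : deriv (fun ζ => -v ζ) = fun ζ => -deriv v ζ := by
    funext x; exact deriv.neg
  rw [hd]
  have hd2 : deriv (fun ζ => -deriv v ζ) ζ = -deriv (deriv v) ζ := deriv.neg
  rw [hd2]
  have := h3 ζ hζ
  ring_nf
  ring_nf at this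
  linarith

lemma hasDerivAt_W (hm : 3 < m) (h : Sol m B σ v) {ζ : ℝ} (hζ : 0 < ζ) :
    HasDerivAt (W m v) (ζ ^ ((m-2)⁻¹ - 1) * ((B * ζ ^ (m/(m-2)) - σ) * v ζ)) ζ := by
  have hm2 : (0:ℝ) < m - 2 := by linarith
  have hr : HasDerivAt (fun t : ℝ => t ^ (m-2)⁻¹) ((m-2)⁻¹ * ζ ^ ((m-2)⁻¹ - 1)) ζ :=
    Real.hasDerivAt_rpow_const (Or.inl hζ.ne')
  have hprod := hr.mul (sol_diffDeriv h hζ)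
  have hode := h.2.2 ζ hζ
  refine HasDerivAt.congr_deriv hprod ?_
  have hζa : ζ ^ (m-2)⁻¹ = ζ ^ ((m-2)⁻¹ - 1) * ζ := by
    rw [← Real.rpow_add_one hζ.ne']; ring_nf
  have hX : ζ * deriv (deriv v) ζ
      = (B * ζ ^ (m/(m-2)) - σ) * v ζ - deriv v ζ / (m-2) := by linarith
  rw [hζa, mul_assoc _ ζ, hX]
  field_simp
  ring

lemma contW (h : Sol m B σ v) : ContinuousOn (W m v) (Set.Ioi 0) := by
  apply ContinuousOn.mul ?_ (sol_contDeriv h)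
  intro t ht
  exact (Real.continuousAt_rpow_const t _ (Or.inl (ne_of_gt ht))).continuousWithinAt

lemma sigma_le (hm : 3 < m) (hB : 0 < B) (hσ : 0 ≤ σ) {ζ : ℝ}
    (hζ : (σ/B) ^ ((m-2)/m) ≤ ζ) : σ ≤ B * ζ ^ (m/(m-2)) := by
  have hm0 : 0 < m := by linarith
  have hm2 : 0 < m - 2 := by linarith
  have hbase : 0 ≤ σ/B := by positivity
  have h0 : 0 ≤ (σ/B) ^ ((m-2)/m) := Real.rpow_nonneg hbase _
  have h1 : ((σ/B) ^ ((m-2)/m)) ^ (m/(m-2)) ≤ ζ ^ (m/(m-2)) :=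
    Real.rpow_le_rpow h0 hζ (by positivity)
  rw [← Real.rpow_mul hbase] at h1
  have he : (m-2)/m * (m/(m-2)) = 1 := by field_simp
  rw [he, Real.rpow_one] at h1
  have : B * (σ/B) ≤ B * ζ ^ (m/(m-2)) := by nlinarith
  calc σ = B * (σ/B) := by field_simp
    _ ≤ _ := this

lemma zsig_nonneg (hB : 0 < B) (hσ : 0 ≤ σ) : 0 ≤ (σ/B) ^ ((m-2)/m) :=
  Real.rpow_nonneg (by positivity) _

/-- On an interval where `v > 0` (to the right of `ζ_σ`), the derivative is nonnegative. -/
lemma deriv_nonneg_of_pos (hm : 3 < m) (hB : 0 < B) (hσ : 0 ≤ σ) (h : Sol m B σ v)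
    {ζ₁ ζ₂ : ℝ} (hσζ : (σ/B) ^ ((m-2)/m) ≤ ζ₁) (h0 : 0 ≤ ζ₁)
    (hd : 0 < ζ₁ → 0 ≤ deriv v ζ₁)
    (hpos : ∀ t ∈ Set.Ioo ζ₁ ζ₂, 0 < v t) :
    ∀ x ∈ Set.Ioo ζ₁ ζ₂, 0 ≤ deriv v x := by
  have hm2 : (0:ℝ) < m - 2 := by linarith
  intro x hx
  have hx0 : 0 < x := lt_of_le_of_lt h0 hx.1
  -- deriv of W is nonneg on Ioo ζ₁ x
  have hWd : ∀ t ∈ Set.Ioo ζ₁ x, 0 ≤ deriv (W m v) t := by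
    intro t ht
    have ht0 : 0 < t := lt_of_le_of_lt h0 ht.1
    rw [(hasDerivAt_W hm h ht0).deriv]
    have h1 : 0 ≤ t ^ ((m-2)⁻¹ - 1) := Real.rpow_nonneg ht0.le _
    have h2 : σ ≤ B * t ^ (m/(m-2)) := sigma_le hm hB hσ (le_trans hσζ ht.1.le)
    have h3 : 0 < v t := hpos t ⟨ht.1, lt_trans ht.2 hx.2⟩
    have : 0 ≤ (B * t ^ (m/(m-2)) - σ) * v t := mul_nonneg (by linarith) h3.le
    exact mul_nonneg h1 this
  have hWx : 0 ≤ W m v x := by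
    rcases eq_or_lt_of_le h0 with h0' | h0'
    · -- ζ₁ = 0 : use the limit of W at 0⁺
      subst h0'
      have hmono : MonotoneOn (W m v) (Set.Ioc 0 x) := by
        apply monotoneOn_of_deriv_nonneg (convex_Ioc _ _)
        · exact (contW h).mono (fun t ht => ht.1)
        · intro t ht; rw [interior_Ioc] at ht
          exact (hasDerivAt_W hm h ht.1).differentiableAt.differentiableWithinAt
        · intro t ht; rw [interior_Ioc] at ht; exact hWd t ht
      have hainv : (0:ℝ) < (m-2)⁻¹ := by positivity
      have hW0 : Tendsto (W m v) (nhdsWithin 0 (Set.Ioi 0)) (nhds 0) := by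
        have h1 : Tendsto (fun t : ℝ => t ^ (m-2)⁻¹) (nhdsWithin 0 (Set.Ioi 0)) (nhds 0) := by
          have h1' : ContinuousAt (fun t : ℝ => t ^ (m-2)⁻¹) 0 :=
            Real.continuousAt_rpow_const 0 _ (Or.inr hainv.le)
          have h1'' := h1'.tendsto
          rw [Real.zero_rpow (ne_of_gt hainv)] at h1''
          exact h1''.mono_left nhdsWithin_le_nhds
        have h2 : Tendsto (derivWithin v (Set.Ici 0)) (nhdsWithin 0 (Set.Ioi 0))
            (nhds (derivWithin v (Set.Ici 0) 0)) := by
          have h2' := (h.1.continuousOn_derivWithin (uniqueDiffOn_Ici 0) le_rfl) 0 Set.self_mem_Ici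
          exact h2'.tendsto.mono_left (nhdsWithin_mono 0 Set.Ioi_subset_Ici_self)
        have h3 := h1.mul h2
        rw [zero_mul] at h3
        apply h3.congr'
        filter_upwards [self_mem_nhdsWithin] with t ht
        show t ^ (m-2)⁻¹ * derivWithin v (Set.Ici 0) t = W m v t
        unfold W
        rw [derivWithin_of_mem_nhds (Ici_mem_nhds ht)]
      have hev : ∀ᶠ t in nhdsWithin 0 (Set.Ioi 0), W m v t ≤ W m v x := by
        filter_upwards [Ioc_mem_nhdsGT hx0] with t ht
        exact hmono ht ⟨hx0, le_refl x⟩ ht.2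
      exact le_of_tendsto hW0 hev
    · -- ζ₁ > 0
      have hmono : MonotoneOn (W m v) (Set.Icc ζ₁ x) := by
        apply monotoneOn_of_deriv_nonneg (convex_Icc _ _)
        · exact (contW h).mono (fun t ht => lt_of_lt_of_le h0' ht.1)
        · intro t ht
          rw [interior_Icc] at ht
          have ht0 : 0 < t := lt_trans h0' ht.1
          exact (hasDerivAt_W hm h ht0).differentiableAt.differentiableWithinAt
        · intro t ht
          rw [interior_Icc] at ht
          exact hWd t ht
      have h1 : W m v ζ₁ ≤ W m v x :=
        hmono ⟨le_refl _, hx.1.le⟩ ⟨hx.1.le, le_refl _⟩ hx.1.le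
      have h2 : 0 ≤ W m v ζ₁ :=
        mul_nonneg (Real.rpow_nonneg h0'.le _) (hd h0')
      linarith
  have hxa : 0 < x ^ (m-2)⁻¹ := Real.rpow_pos_of_pos hx0 _
  unfold W at hWx
  nlinarith


/-- Main structure lemma: if `v` is positive with nonneg derivative at `ζ₁ ≥ ζ_σ`,
then `v` stays positive, is monotone, with nonneg derivative to the right. -/
lemma mono_of_pos (hm : 3 < m) (hB : 0 < B) (hσ : 0 ≤ σ) (h : Sol m B σ v)
    {ζ₁ : ℝ} (hσζ : (σ/B) ^ ((m-2)/m) ≤ ζ₁) (hv1 : 0 < v ζ₁)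
    (hd : 0 < ζ₁ → 0 ≤ deriv v ζ₁) :
    (∀ ζ, ζ₁ ≤ ζ → v ζ₁ ≤ v ζ) ∧ (∀ ζ, ζ₁ ≤ ζ → 0 < v ζ) ∧
      (∀ ζ, ζ₁ < ζ → 0 ≤ deriv v ζ) := by
  have h0 : 0 ≤ ζ₁ := le_trans (zsig_nonneg hB hσ) hσζ
  have hcont : ContinuousOn v (Set.Ici ζ₁) :=
    h.1.continuousOn.mono (Set.Ici_subset_Ici.mpr h0)
  have hpos : ∀ ζ, ζ₁ ≤ ζ → 0 < v ζ := by
    by_contra hc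
    push_neg at hc
    obtain ⟨ζ₂', hζ₂', hv2'⟩ := hc
    set S : Set ℝ := {ζ | ζ₁ ≤ ζ ∧ v ζ ≤ 0} with hS
    have hSne : S.Nonempty := ⟨ζ₂', hζ₂', hv2'⟩
    have hSbdd : BddBelow S := ⟨ζ₁, fun t ht => ht.1⟩
    have hSclosed : IsClosed S := by
      have : S = Set.Ici ζ₁ ∩ v ⁻¹' Set.Iic 0 := by
        ext t; simp [hS, Set.mem_setOf_eq]
      rw [this]
      exact hcont.preimage_isClosed_of_isClosed isClosed_Ici isClosed_Iic
    set ζ₂ := sInf S with hζ₂def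
    have hmem : ζ₂ ∈ S := hSclosed.csInf_mem hSne hSbdd
    have hζ₁₂ : ζ₁ < ζ₂ := by
      rcases eq_or_lt_of_le hmem.1 with h' | h'
      · exfalso; rw [← h'] at hmem; linarith [hmem.2]
      · exact h'
    have hmin : ∀ t ∈ Set.Ioo ζ₁ ζ₂, 0 < v t := by
      intro t ht
      by_contra hvt
      push_neg at hvt
      have : t ∈ S := ⟨ht.1.le, hvt⟩
      have := csInf_le hSbdd this
      linarith [ht.2]
    have hderivnn := deriv_nonneg_of_pos hm hB hσ h hσζ h0 hd hmin
    have hmono : MonotoneOn v (Set.Icc ζ₁ ζ₂) := by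
      apply monotoneOn_of_deriv_nonneg (convex_Icc _ _)
        (hcont.mono Set.Icc_subset_Ici_self)
      · intro t ht
        rw [interior_Icc] at ht
        have ht0 : 0 < t := lt_of_le_of_lt h0 ht.1
        exact (sol_diff h ht0).differentiableAt.differentiableWithinAt
      · intro t ht
        rw [interior_Icc] at ht
        exact hderivnn t ht
    have := hmono ⟨le_refl _, hζ₁₂.le⟩ ⟨hζ₁₂.le, le_refl _⟩ hζ₁₂.le
    linarith [hmem.2]
  have hdnn : ∀ ζ, ζ₁ < ζ → 0 ≤ deriv v ζ := by
    intro ζ hζ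
    exact deriv_nonneg_of_pos hm hB hσ h hσζ h0 hd
      (fun t ht => hpos t ht.1.le) ζ ⟨hζ, lt_add_one ζ⟩
  have hmono : MonotoneOn v (Set.Ici ζ₁) := by
    apply monotoneOn_of_deriv_nonneg (convex_Ici _) hcont
    · intro t ht
      rw [interior_Ici] at ht
      have ht0 : 0 < t := lt_of_le_of_lt h0 ht
      exact (sol_diff h ht0).differentiableAt.differentiableWithinAt
    · intro t ht
      rw [interior_Ici] at ht
      exact hdnn t ht
  exact ⟨fun ζ hζ => hmono Set.self_mem_Ici hζ hζ, hpos, hdnn⟩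

/-- Growth of `W` when `v` is bounded below by a positive constant. -/
lemma W_grow (hm : 3 < m) (hB : 0 < B) (hσ : 0 ≤ σ) (h : Sol m B σ v)
    {ζ₀ c : ℝ} (h0 : 0 ≤ ζ₀) (hc : 0 < c) (hlb : ∀ ζ, ζ₀ ≤ ζ → c ≤ v ζ) :
    ∃ ζ₃, ζ₀ < ζ₃ ∧ 1 ≤ ζ₃ ∧ ∀ ζ, ζ₃ ≤ ζ →
      W m v ζ₃ + c * (m-2) * (ζ ^ (m-2)⁻¹ - ζ₃ ^ (m-2)⁻¹) ≤ W m v ζ := by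
  have hm2 : (0:ℝ) < m - 2 := by linarith
  refine ⟨max (ζ₀ + 1) (max 1 ((σ + 1)/B)), ?_, ?_, ?_⟩
  · calc ζ₀ < ζ₀ + 1 := lt_add_one _
      _ ≤ _ := le_max_left _ _
  · exact le_trans (le_max_left _ _) (le_max_right _ _)
  set ζ₃ := max (ζ₀ + 1) (max 1 ((σ + 1)/B)) with hζ₃def
  have hζ₃1 : 1 ≤ ζ₃ := le_trans (le_max_left _ _) (le_max_right _ _)
  have hζ₃0 : 0 < ζ₃ := lt_of_lt_of_le one_pos hζ₃1
  have hζ₃ζ₀ : ζ₀ < ζ₃ := lt_of_lt_of_le (lt_add_one _) (le_max_left _ _)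
  -- g := W - c(m-2)·ζ^(1/(m-2)) is monotone on [ζ₃, ∞)
  set g : ℝ → ℝ := fun ζ => W m v ζ - c * (m-2) * ζ ^ (m-2)⁻¹ with hgdef
  have hgmono : MonotoneOn g (Set.Ici ζ₃) := by
    apply monotoneOn_of_deriv_nonneg (convex_Ici _)
    · apply ContinuousOn.sub
      · exact (contW h).mono (fun t ht => lt_of_lt_of_le hζ₃0 ht)
      · apply ContinuousOn.mul continuousOn_const
        intro t ht
        exact (Real.continuousAt_rpow_const t _
          (Or.inl (ne_of_gt (lt_of_lt_of_le hζ₃0 ht)))).continuousWithinAt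
    · intro t ht
      rw [interior_Ici] at ht
      have ht0 : 0 < t := lt_trans hζ₃0 ht
      exact ((hasDerivAt_W hm h ht0).sub
        (((Real.hasDerivAt_rpow_const (p := (m-2)⁻¹)
          (Or.inl ht0.ne')).const_mul (c * (m-2))))).differentiableAt.differentiableWithinAt
    · intro t ht
      rw [interior_Ici] at ht
      have ht0 : 0 < t := lt_trans hζ₃0 ht
      have hdg := (hasDerivAt_W hm h ht0).sub
        ((Real.hasDerivAt_rpow_const (p := (m-2)⁻¹) (Or.inl ht0.ne')).const_mul (c * (m-2)))
      rw [show g = (W m v - fun y => c * (m - 2) * y ^ (m - 2)⁻¹) from rfl, hdg.deriv]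
      have ht1 : 1 ≤ t := le_trans hζ₃1 ht.le
      have htp : t ≤ t ^ (m/(m-2)) := by
        nth_rewrite 1 [← Real.rpow_one t]
        apply Real.rpow_le_rpow_of_exponent_le ht1
        rw [le_div_iff₀ hm2]; nlinarith
      have hbσ : 1 ≤ B * t ^ (m/(m-2)) - σ := by
        have hBt : (σ + 1)/B ≤ t :=
          le_trans (le_trans (le_max_right _ _) (le_max_right _ _)) ht.le
        have : σ + 1 ≤ B * t := by
          rw [div_le_iff₀ hB] at hBt; linarith
        nlinarith
      have hvc : c ≤ v t := hlb t (le_trans hζ₃ζ₀.le ht.le)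
      have hfac : 0 ≤ t ^ ((m-2)⁻¹ - 1) := Real.rpow_nonneg ht0.le _
      have hcm : c * (m-2) * ((m-2)⁻¹ * t ^ ((m-2)⁻¹ - 1)) = c * t ^ ((m-2)⁻¹ - 1) := by
        field_simp
      rw [hcm]
      have : c ≤ (B * t ^ (m/(m-2)) - σ) * v t := by nlinarith
      nlinarith
  intro ζ hζ
  have := hgmono Set.self_mem_Ici hζ hζ
  simp only [hgdef] at this
  linarith

/-- If `v ≥ c > 0` from `ζ₀` on but `v' ≤ 0` from `ζ₀` on: contradiction. -/
lemma no_small_pos (hm : 3 < m) (hB : 0 < B) (hσ : 0 ≤ σ) (h : Sol m B σ v)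
    {ζ₀ c : ℝ} (h0 : 0 ≤ ζ₀) (hc : 0 < c) (hlb : ∀ ζ, ζ₀ ≤ ζ → c ≤ v ζ)
    (hd : ∀ ζ, ζ₀ ≤ ζ → deriv v ζ ≤ 0) : False := by
  have hm2 : (0:ℝ) < m - 2 := by linarith
  obtain ⟨ζ₃, hζ₃0, hζ₃1, hgrow⟩ := W_grow hm hB hσ h h0 hc hlb
  have htend : Tendsto (fun ζ : ℝ => ζ ^ (m-2)⁻¹) atTop atTop :=
    tendsto_rpow_atTop (by positivity)
  obtain ⟨ζ, hζ₃ζ, hζbig⟩ :=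
    ((eventually_ge_atTop ζ₃).and
      (htend.eventually_ge_atTop (ζ₃ ^ (m-2)⁻¹ + (1 + |W m v ζ₃|) / (c * (m-2))))).exists
  have h1 := hgrow ζ hζ₃ζ
  have hW : W m v ζ ≤ 0 := by
    have hζpos : 0 < ζ := lt_of_lt_of_le (lt_of_lt_of_le one_pos hζ₃1) hζ₃ζ
    exact mul_nonpos_of_nonneg_of_nonpos (Real.rpow_nonneg hζpos.le _)
      (hd ζ (le_trans hζ₃0.le hζ₃ζ))
  have habs : -|W m v ζ₃| ≤ W m v ζ₃ := neg_abs_le _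
  have hcm : 0 < c * (m-2) := by positivity
  have : (1 + |W m v ζ₃|) / (c * (m-2)) * (c * (m-2)) = 1 + |W m v ζ₃| := by
    field_simp
  nlinarith [mul_le_mul_of_nonneg_right (by linarith : ζ₃ ^ (m-2)⁻¹ + (1 + |W m v ζ₃|) / (c * (m-2)) ≤ ζ ^ (m-2)⁻¹) hcm.le]


lemma tendsto_top (hm : 3 < m) (hB : 0 < B) (hσ : 0 ≤ σ) (h : Sol m B σ v)
    {ζ₀ c : ℝ} (h0 : 0 ≤ ζ₀) (hc : 0 < c) (hlb : ∀ ζ, ζ₀ ≤ ζ → c ≤ v ζ)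
    (hd : ∀ ζ, ζ₀ < ζ → 0 ≤ deriv v ζ) :
    Tendsto v atTop atTop := by
  have hm2 : (0:ℝ) < m - 2 := by linarith
  obtain ⟨ζ₃, hζ₃0, hζ₃1, hgrow⟩ := W_grow hm hB hσ h h0 hc hlb
  have hζ₃pos : 0 < ζ₃ := lt_of_lt_of_le one_pos hζ₃1
  have hW3 : 0 ≤ W m v ζ₃ :=
    mul_nonneg (Real.rpow_nonneg hζ₃pos.le _) (hd ζ₃ hζ₃0)
  set k := c * (m-2) / 2 with hkdef
  have hk : 0 < k := by positivity
  set ζ₄ := (2:ℝ) ^ (m-2) * ζ₃ with hζ₄def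
  have h2m : (1:ℝ) ≤ (2:ℝ) ^ (m-2) := by
    have := Real.rpow_le_rpow_of_exponent_le one_le_two (show (0:ℝ) ≤ m-2 by linarith)
    rwa [Real.rpow_zero] at this
  have hζ₄3 : ζ₃ ≤ ζ₄ := by
    rw [hζ₄def]; nlinarith
  have hζ₄pos : 0 < ζ₄ := lt_of_lt_of_le hζ₃pos hζ₄3
  have h24 : ζ₄ ^ (m-2)⁻¹ = 2 * ζ₃ ^ (m-2)⁻¹ := by
    rw [hζ₄def, Real.mul_rpow (by positivity) hζ₃pos.le,
      ← Real.rpow_mul (by norm_num : (0:ℝ) ≤ 2), mul_inv_cancel₀ (ne_of_gt hm2),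
      Real.rpow_one]
  have hd2 : ∀ ζ, ζ₄ ≤ ζ → k ≤ deriv v ζ := by
    intro ζ hζ
    have hζpos : 0 < ζ := lt_of_lt_of_le hζ₄pos hζ
    have h1 := hgrow ζ (le_trans hζ₄3 hζ)
    have h3 : 0 < ζ ^ (m-2)⁻¹ := Real.rpow_pos_of_pos hζpos _
    have h2 : 2 * ζ₃ ^ (m-2)⁻¹ ≤ ζ ^ (m-2)⁻¹ := by
      rw [← h24]
      exact Real.rpow_le_rpow hζ₄pos.le hζ (by positivity)
    have h1' : W m v ζ₃ + c * (m-2) * (ζ ^ (m-2)⁻¹ - ζ₃ ^ (m-2)⁻¹)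
        ≤ ζ ^ (m-2)⁻¹ * deriv v ζ := h1
    have : k * ζ ^ (m-2)⁻¹ ≤ deriv v ζ * ζ ^ (m-2)⁻¹ := by
      rw [hkdef]; nlinarith
    exact le_of_mul_le_mul_right this h3
  have hmono2 : ∀ ζ, ζ₄ ≤ ζ → v ζ₄ + k * (ζ - ζ₄) ≤ v ζ := by
    intro ζ hζ
    have hφ : MonotoneOn (fun t => v t - k * t) (Set.Ici ζ₄) := by
      apply monotoneOn_of_deriv_nonneg (convex_Ici _)
      · apply ContinuousOn.sub
        · exact h.1.continuousOn.mono (fun t ht => le_trans hζ₄pos.le ht)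
        · exact (continuous_const.mul continuous_id).continuousOn
      · intro t ht
        rw [interior_Ici] at ht
        have ht0 : 0 < t := lt_trans hζ₄pos ht
        have hdφ : HasDerivAt (fun t => v t - k * t) (deriv v t - k) t := by
          have h' := (sol_diff h ht0).sub ((hasDerivAt_id t).const_mul k)
          simp at h'
          exact h'
        exact hdφ.differentiableAt.differentiableWithinAt
      · intro t ht
        rw [interior_Ici] at ht
        have ht0 : 0 < t := lt_trans hζ₄pos ht
        have hdφ : HasDerivAt (fun t => v t - k * t) (deriv v t - k) t := by
          have h' := (sol_diff h ht0).sub ((hasDerivAt_id t).const_mul k)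
          simp at h'
          exact h'
        rw [hdφ.deriv]
        have := hd2 t ht.le
        linarith
    have := hφ Set.self_mem_Ici hζ hζ
    simp only at this
    linarith
  have hlin : Tendsto (fun ζ : ℝ => v ζ₄ + k * (ζ - ζ₄)) atTop atTop := by
    apply tendsto_atTop_add_const_left
    apply Tendsto.const_mul_atTop hk
    exact tendsto_atTop_add_const_right _ _ tendsto_id
  apply tendsto_atTop_mono' atTop ?_ hlin
  filter_upwards [eventually_ge_atTop ζ₄] with ζ hζ
  exact hmono2 ζ hζ

/-- Part (1) of the theorem, for `Sol`. -/
lemma main_pos (hm : 3 < m) (hB : 0 < B) (hσ : 0 ≤ σ) (h : Sol m B σ v)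
    {ζ₁ : ℝ} (hσζ : (σ/B) ^ ((m-2)/m) ≤ ζ₁) (hv1 : 0 < v ζ₁) (hd1 : 0 ≤ deriv v ζ₁) :
    (∀ ζ, ζ₁ ≤ ζ → v ζ₁ ≤ v ζ) ∧ Tendsto v atTop atTop := by
  obtain ⟨hmono, hpos, hdnn⟩ := mono_of_pos hm hB hσ h hσζ hv1 (fun _ => hd1)
  refine ⟨hmono, ?_⟩
  have h0 : 0 ≤ ζ₁ := le_trans (zsig_nonneg hB hσ) hσζ
  exact tendsto_top hm hB hσ h h0 hv1 hmono hdnn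

lemma key_arith {c M K a ζ σ P P₀ V U DD : ℝ}
    (hc : 0 < c) (hσ : 0 ≤ σ) (ha : 0 < a) (haζ : a ≤ ζ)
    (hP0 : 0 ≤ P) (hPP0 : P ≤ P₀)
    (hM : M = P₀ + σ + 2*c) (hK : K = 1 + M/a)
    (hZDD : ζ * DD = (P - σ) * V - U * c) :
    0 ≤ K * (V*V + U*U) + (U*V + V*U + (DD*U + U*DD)) := by
  have hζpos : 0 < ζ := lt_of_lt_of_le ha haζ
  have hS : 0 ≤ V*V + U*U := by nlinarith [sq_nonneg V, sq_nonneg U]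
  have hM0 : 0 ≤ M := by nlinarith
  have hKζ : ζ + M ≤ ζ * K := by
    have h1a : 1 ≤ ζ / a := (one_le_div ha).mpr haζ
    have h2 : ζ * K = ζ + (ζ/a) * M := by rw [hK]; ring
    have h3 : M ≤ (ζ/a) * M := le_mul_of_one_le_left hM0 h1a
    linarith
  have hb1 : -(ζ * (V*V+U*U)) ≤ 2*ζ*V*U := by
    nlinarith [mul_nonneg hζpos.le (sq_nonneg (V+U))]
  have hb2 : -((P₀ + σ) * (V*V+U*U)) ≤ 2*(P-σ)*(U*V) := by
    rcases le_or_gt 0 (P - σ) with hs | hs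
    · nlinarith [mul_nonneg hs (sq_nonneg (V+U)),
        mul_le_mul_of_nonneg_right (show P - σ ≤ P₀+σ by linarith) hS]
    · nlinarith [mul_nonneg (show 0 ≤ σ - P by linarith) (sq_nonneg (V-U)),
        mul_le_mul_of_nonneg_right (show σ - P ≤ P₀+σ by linarith) hS]
  have hb3 : 2*c*(U*U) ≤ 2*c*(V*V+U*U) := by nlinarith [sq_nonneg V]
  have hT : 0 ≤ ζ * (K * (V*V + U*U) + (U*V + V*U + (DD*U + U*DD))) := by
    have hexp : ζ * (K*(V*V+U*U) + (U*V+V*U+(DD*U+U*DD)))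
        = ζ*K*(V*V+U*U) + 2*ζ*V*U + (2*(P-σ)*(U*V) - 2*c*(U*U)) := by
      have h4 : ζ * (K*(V*V+U*U) + (U*V+V*U+(DD*U+U*DD)))
          = ζ*K*(V*V+U*U) + 2*ζ*V*U + 2*(ζ*DD)*U := by ring
      rw [h4, hZDD]; ring
    rw [hexp]
    have h5 := mul_le_mul_of_nonneg_right hKζ hS
    rw [hM] at h5
    nlinarith [hb1, hb2, hb3, h5]
  exact nonneg_of_mul_nonneg_right hT hζpos

/-- Backwards uniqueness (Grönwall): if `v` and `v'` both vanish at `ζ₀ > 0`,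
then `v` vanishes on `(0, ζ₀]`. -/
lemma all_zero (hm : 3 < m) (hB : 0 < B) (hσ : 0 ≤ σ) (h : Sol m B σ v)
    {ζ₀ : ℝ} (hζ₀ : 0 < ζ₀) (hv0 : v ζ₀ = 0) (hd0 : deriv v ζ₀ = 0) :
    ∀ a, 0 < a → a ≤ ζ₀ → v a = 0 := by
  intro a ha haζ
  have hm2 : (0:ℝ) < m - 2 := by linarith
  obtain ⟨c, hc, hcdef⟩ : ∃ c : ℝ, 0 < c ∧ c = (m-2)⁻¹ := ⟨_, by positivity, rfl⟩
  obtain ⟨M, hMdef⟩ : ∃ M : ℝ, M = B * ζ₀ ^ (m/(m-2)) + σ + 2*c := ⟨_, rfl⟩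
  obtain ⟨K, hKdef⟩ : ∃ K : ℝ, K = 1 + M/a := ⟨_, rfl⟩
  set g : ℝ → ℝ := fun ζ => v ζ * v ζ + deriv v ζ * deriv v ζ with hgdef
  set G : ℝ → ℝ := fun ζ => Real.exp (K * ζ) * g ζ with hGdef
  have hgd : ∀ ζ, 0 < ζ → HasDerivAt g
      (deriv v ζ * v ζ + v ζ * deriv v ζ +
        (deriv (deriv v) ζ * deriv v ζ + deriv v ζ * deriv (deriv v) ζ)) ζ := by
    intro ζ hζ
    rw [hgdef]
    exact ((sol_diff h hζ).mul (sol_diff h hζ)).add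
      ((sol_diffDeriv h hζ).mul (sol_diffDeriv h hζ))
  have hGd : ∀ ζ, 0 < ζ → HasDerivAt G
      (K * Real.exp (K * ζ) * g ζ + Real.exp (K * ζ) *
        (deriv v ζ * v ζ + v ζ * deriv v ζ +
          (deriv (deriv v) ζ * deriv v ζ + deriv v ζ * deriv (deriv v) ζ))) ζ := by
    intro ζ hζ
    have hE : HasDerivAt (fun ζ => Real.exp (K * ζ)) (K * Real.exp (K * ζ)) ζ := by
      have := ((hasDerivAt_id ζ).const_mul K).exp
      simpa [mul_comm] using this
    rw [hGdef]
    exact hE.mul (hgd ζ hζ)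
  have hkey : ∀ ζ, ζ ∈ Set.Ioo a ζ₀ → 0 ≤ K * g ζ +
      (deriv v ζ * v ζ + v ζ * deriv v ζ +
        (deriv (deriv v) ζ * deriv v ζ + deriv v ζ * deriv (deriv v) ζ)) := by
    intro ζ hζmem
    have hζpos : 0 < ζ := lt_trans ha hζmem.1
    have hode := h.2.2 ζ hζpos
    have hdiv : deriv v ζ / (m-2) = deriv v ζ * c := by rw [hcdef, div_eq_mul_inv]
    have hZDD : ζ * deriv (deriv v) ζ
        = (B * ζ ^ (m/(m-2)) - σ) * v ζ - deriv v ζ * c := by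
      rw [← hdiv]; linarith
    have hP0 : 0 ≤ B * ζ ^ (m/(m-2)) := by positivity
    have hPP0 : B * ζ ^ (m/(m-2)) ≤ B * ζ₀ ^ (m/(m-2)) := by
      apply mul_le_mul_of_nonneg_left _ hB.le
      exact Real.rpow_le_rpow hζpos.le hζmem.2.le (by positivity)
    have hkk := key_arith (V := v ζ) (U := deriv v ζ) (DD := deriv (deriv v) ζ)
      hc hσ ha hζmem.1.le hP0 hPP0 hMdef hKdef hZDD
    rw [hgdef]
    exact hkk
  have hsub : Set.Icc a ζ₀ ⊆ Set.Ici 0 := fun t ht => le_trans ha.le ht.1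
  have hsub' : Set.Icc a ζ₀ ⊆ Set.Ioi 0 := fun t ht => lt_of_lt_of_le ha ht.1
  have hGmono : MonotoneOn G (Set.Icc a ζ₀) := by
    apply monotoneOn_of_deriv_nonneg (convex_Icc _ _)
    · rw [hGdef]
      apply ContinuousOn.mul
      · exact (Real.continuous_exp.comp (continuous_const.mul continuous_id)).continuousOn
      · rw [hgdef]
        exact ((h.1.continuousOn.mono hsub).mul (h.1.continuousOn.mono hsub)).add
          (((sol_contDeriv h).mono hsub').mul ((sol_contDeriv h).mono hsub'))
    · intro t ht
      rw [interior_Icc] at ht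
      exact (hGd t (lt_trans ha ht.1)).differentiableAt.differentiableWithinAt
    · intro t ht
      rw [interior_Icc] at ht
      rw [(hGd t (lt_trans ha ht.1)).deriv]
      have hk := hkey t ht
      have he : (0:ℝ) < Real.exp (K * t) := Real.exp_pos _
      nlinarith [mul_nonneg he.le hk]
  have hGζ₀ : G ζ₀ = 0 := by
    show Real.exp (K*ζ₀) * (v ζ₀ * v ζ₀ + deriv v ζ₀ * deriv v ζ₀) = 0
    rw [hv0, hd0]; ring
  have hGa : G a ≤ 0 := by
    have := hGmono ⟨le_refl _, haζ⟩ ⟨haζ, le_refl _⟩ haζ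
    rwa [hGζ₀] at this
  have hga : v a * v a + deriv v a * deriv v a = 0 := by
    have he : (0:ℝ) < Real.exp (K * a) := Real.exp_pos _
    have hGa' : Real.exp (K*a) * (v a * v a + deriv v a * deriv v a) ≤ 0 := hGa
    nlinarith [mul_self_nonneg (v a), mul_self_nonneg (deriv v a)]
  have hvv : v a * v a = 0 := by
    nlinarith [mul_self_nonneg (v a), mul_self_nonneg (deriv v a)]
  exact mul_self_eq_zero.mp hvv

/-- If `v` is positive and strictly decreasing (in the sense `v' < 0`) on a ray,
then `v → 0`. -/
lemma to_zero (hm : 3 < m) (hB : 0 < B) (hσ : 0 ≤ σ) (h : Sol m B σ v)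
    {ζs : ℝ} (hζs : 0 < ζs) (hpos : ∀ ζ, ζs ≤ ζ → 0 < v ζ)
    (hneg : ∀ ζ, ζs ≤ ζ → deriv v ζ < 0) :
    Tendsto v atTop (nhds 0) := by
  have hanti : AntitoneOn v (Set.Ici ζs) := by
    apply antitoneOn_of_deriv_nonpos (convex_Ici _)
      (h.1.continuousOn.mono (Set.Ici_subset_Ici.mpr hζs.le))
    · intro t ht
      rw [interior_Ici] at ht
      exact (sol_diff h (lt_trans hζs ht)).differentiableAt.differentiableWithinAt
    · intro t ht
      rw [interior_Ici] at ht
      exact (hneg t ht.le).le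
  set u : ℝ → ℝ := fun t => v (max t ζs) with hudef
  have huanti : Antitone u := by
    intro s t hst
    exact hanti (Set.mem_Ici.mpr (le_max_right _ _)) (Set.mem_Ici.mpr (le_max_right _ _)) (max_le_max hst (le_refl _))
  have hubdd : BddBelow (Set.range u) := by
    refine ⟨0, ?_⟩
    rintro x ⟨t, rfl⟩
    exact (hpos _ (le_max_right _ _)).le
  have hulim : Tendsto u atTop (nhds (⨅ t, u t)) := tendsto_atTop_ciInf huanti hubdd
  have hL0 : 0 ≤ ⨅ t, u t := le_ciInf (fun t => (hpos _ (le_max_right _ _)).le)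
  have hLe : (⨅ t, u t) = 0 := by
    by_contra hne
    have hLpos : 0 < ⨅ t, u t := lt_of_le_of_ne hL0 (Ne.symm hne)
    have hlb : ∀ ζ, ζs ≤ ζ → (⨅ t, u t) ≤ v ζ := by
      intro ζ hζ
      have h2 : u ζ = v ζ := by rw [hudef]; simp [max_eq_left hζ]
      have := ciInf_le hubdd ζ
      linarith
    exact no_small_pos hm hB hσ h hζs.le hLpos hlb (fun ζ hζ => (hneg ζ hζ).le)
  rw [hLe] at hulim
  apply hulim.congr'
  filter_upwards [eventually_ge_atTop ζs] with t ht
  rw [hudef]; simp [max_eq_left ht]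

/-- Under the "no monotone escape" hypotheses, `v` cannot vanish beyond `ζs`. -/
lemma no_zero (hm : 3 < m) (hB : 0 < B) (hσ : 0 ≤ σ) (h : Sol m B σ v)
    (h1 : v 0 = 1) {ζs : ℝ} (hζs : 0 < ζs)
    (hA : ∀ ζ, ζs ≤ ζ → 0 < v ζ → deriv v ζ < 0)
    (hB' : ∀ ζ, ζs ≤ ζ → v ζ < 0 → 0 < deriv v ζ) :
    ∀ ζ, ζs ≤ ζ → v ζ ≠ 0 := by
  intro ζ₀ hζ₀ hv0
  have hζ₀pos : 0 < ζ₀ := lt_of_lt_of_le hζs hζ₀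
  rcases lt_trichotomy (deriv v ζ₀) 0 with hd | hd | hd
  · -- v' < 0 at the zero: v becomes negative with negative derivative
    have hcont : ContinuousAt (deriv v) ζ₀ :=
      ((sol_contDeriv h) ζ₀ hζ₀pos).continuousAt (Ioi_mem_nhds hζ₀pos)
    have hev : (deriv v) ⁻¹' (Set.Iio 0) ∈ nhds ζ₀ := hcont (Iio_mem_nhds hd)
    obtain ⟨ε, hε, hball⟩ := Metric.mem_nhds_iff.mp hev
    have hd' : ∀ t ∈ Set.Icc ζ₀ (ζ₀ + ε/2), deriv v t < 0 := by
      intro t ht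
      apply hball
      rw [Metric.mem_ball, Real.dist_eq, abs_of_nonneg (by linarith [ht.1])]
      linarith [ht.2]
    have hsa : StrictAntiOn v (Set.Icc ζ₀ (ζ₀ + ε/2)) := by
      apply strictAntiOn_of_deriv_neg (convex_Icc _ _)
      · exact h.1.continuousOn.mono (fun t ht => le_trans hζ₀pos.le ht.1)
      · intro t ht
        rw [interior_Icc] at ht
        exact hd' t ⟨ht.1.le, ht.2.le⟩
    have hvlt : v (ζ₀ + ε/2) < 0 := by
      have := hsa ⟨le_refl _, by linarith⟩ ⟨by linarith, le_refl _⟩ (by linarith)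
      rw [hv0] at this; exact this
    have := hB' (ζ₀ + ε/2) (by linarith) hvlt
    have := hd' (ζ₀ + ε/2) ⟨by linarith, le_refl _⟩
    linarith
  · -- v' = 0 at the zero: backwards uniqueness contradicts v 0 = 1
    have hz := all_zero hm hB hσ h hζ₀pos hv0 hd
    have hcv : ContinuousWithinAt v (Set.Ici 0) 0 := h.1.continuousOn 0 Set.self_mem_Ici
    have ht1 : Tendsto v (nhdsWithin 0 (Set.Ioi 0)) (nhds 1) := by
      rw [← h1]
      exact hcv.tendsto.mono_left (nhdsWithin_mono 0 Set.Ioi_subset_Ici_self)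
    have ht0 : Tendsto v (nhdsWithin 0 (Set.Ioi 0)) (nhds 0) := by
      apply Tendsto.congr' _ tendsto_const_nhds
      filter_upwards [Ioo_mem_nhdsGT hζ₀pos] with t ht
      exact (hz t ht.1 ht.2.le).symm
    have := tendsto_nhds_unique ht0 ht1
    norm_num at this
  · -- v' > 0 at the zero: v becomes positive with positive derivative
    have hcont : ContinuousAt (deriv v) ζ₀ :=
      ((sol_contDeriv h) ζ₀ hζ₀pos).continuousAt (Ioi_mem_nhds hζ₀pos)
    have hev : (deriv v) ⁻¹' (Set.Ioi 0) ∈ nhds ζ₀ := hcont (Ioi_mem_nhds hd)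
    obtain ⟨ε, hε, hball⟩ := Metric.mem_nhds_iff.mp hev
    have hd' : ∀ t ∈ Set.Icc ζ₀ (ζ₀ + ε/2), 0 < deriv v t := by
      intro t ht
      apply hball
      rw [Metric.mem_ball, Real.dist_eq, abs_of_nonneg (by linarith [ht.1])]
      linarith [ht.2]
    have hsm : StrictMonoOn v (Set.Icc ζ₀ (ζ₀ + ε/2)) := by
      apply strictMonoOn_of_deriv_pos (convex_Icc _ _)
      · exact h.1.continuousOn.mono (fun t ht => le_trans hζ₀pos.le ht.1)
      · intro t ht
        rw [interior_Icc] at ht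
        exact hd' t ⟨ht.1.le, ht.2.le⟩
    have hvgt : 0 < v (ζ₀ + ε/2) := by
      have := hsm ⟨le_refl _, by linarith⟩ ⟨by linarith, le_refl _⟩ (by linarith)
      rw [hv0] at this; exact this
    have := hA (ζ₀ + ε/2) (by linarith) hvgt
    have := hd' (ζ₀ + ε/2) ⟨by linarith, le_refl _⟩
    linarith

theorem stmt8 (m B σ : ℝ) (hm : 3 < m) (hB : 0 < B) (hσ : 0 ≤ σ)
    (v : ℝ → ℝ) (hv : RegSol m B σ v) :
    (Filter.Tendsto v Filter.atTop Filter.atTop ∨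
      Filter.Tendsto v Filter.atTop (nhds 0) ∨
      Filter.Tendsto v Filter.atTop Filter.atBot) ∧
    (∀ ζ₁ : ℝ, (σ / B) ^ ((m - 2) / m) ≤ ζ₁ → 0 < v ζ₁ → 0 ≤ deriv v ζ₁ →
      (∀ ζ : ℝ, ζ₁ ≤ ζ → v ζ₁ ≤ v ζ) ∧
      Filter.Tendsto v Filter.atTop Filter.atTop) ∧
    (∀ ζ₁ : ℝ, (σ / B) ^ ((m - 2) / m) ≤ ζ₁ → v ζ₁ < 0 → deriv v ζ₁ ≤ 0 →
      (∀ ζ : ℝ, ζ₁ ≤ ζ → v ζ ≤ v ζ₁) ∧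
      Filter.Tendsto v Filter.atTop Filter.atBot) := by
  obtain ⟨h1', h2', h3', h4'⟩ := hv
  have hsol : Sol m B σ v := ⟨h1', h2', h3'⟩
  have hpart1 : ∀ ζ₁ : ℝ, (σ / B) ^ ((m - 2) / m) ≤ ζ₁ → 0 < v ζ₁ → 0 ≤ deriv v ζ₁ →
      (∀ ζ : ℝ, ζ₁ ≤ ζ → v ζ₁ ≤ v ζ) ∧ Filter.Tendsto v Filter.atTop Filter.atTop :=
    fun ζ₁ hζ₁ hv1 hd1 => main_pos hm hB hσ hsol hζ₁ hv1 hd1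
  have hpart2 : ∀ ζ₁ : ℝ, (σ / B) ^ ((m - 2) / m) ≤ ζ₁ → v ζ₁ < 0 → deriv v ζ₁ ≤ 0 →
      (∀ ζ : ℝ, ζ₁ ≤ ζ → v ζ ≤ v ζ₁) ∧ Filter.Tendsto v Filter.atTop Filter.atBot := by
    intro ζ₁ hζ₁ hv1 hd1
    have hneg := sol_neg hsol
    have hd1' : (0:ℝ) ≤ deriv (fun ζ => -v ζ) ζ₁ := by
      rw [deriv.fun_neg]; linarith
    have hv1' : 0 < (fun ζ => -v ζ) ζ₁ := by simpa using by linarith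
    have hmp := main_pos hm hB hσ hneg hζ₁ hv1' hd1'
    constructor
    · intro ζ hζ
      have := hmp.1 ζ hζ
      simp only [neg_le_neg_iff] at this
      linarith [this]
    · have ht := hmp.2
      have h2 : Tendsto (fun ζ => -(-v ζ)) atTop atBot := tendsto_neg_atTop_atBot.comp ht
      simpa using h2
  refine ⟨?_, hpart1, hpart2⟩
  set ζs := max ((σ/B) ^ ((m-2)/m)) 1 with hζsdef
  have hζs1 : (σ/B) ^ ((m-2)/m) ≤ ζs := le_max_left _ _
  have hζs0 : 0 < ζs := lt_of_lt_of_le one_pos (le_max_right _ _)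
  by_cases hcA : ∃ ζ₁, ζs ≤ ζ₁ ∧ 0 < v ζ₁ ∧ 0 ≤ deriv v ζ₁
  · obtain ⟨ζ₁, hζ₁, hv1, hd1⟩ := hcA
    exact Or.inl (hpart1 ζ₁ (le_trans hζs1 hζ₁) hv1 hd1).2
  by_cases hcB : ∃ ζ₁, ζs ≤ ζ₁ ∧ v ζ₁ < 0 ∧ deriv v ζ₁ ≤ 0
  · obtain ⟨ζ₁, hζ₁, hv1, hd1⟩ := hcB
    exact Or.inr (Or.inr (hpart2 ζ₁ (le_trans hζs1 hζ₁) hv1 hd1).2)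
  push_neg at hcA hcB
  have hnz : ∀ ζ, ζs ≤ ζ → v ζ ≠ 0 := no_zero hm hB hσ hsol h4' hζs0 hcA hcB
  rcases lt_or_gt_of_ne (hnz ζs (le_refl _)) with hsgn | hsgn
  · -- v < 0 on the ray
    have hvneg : ∀ ζ, ζs ≤ ζ → v ζ < 0 := by
      intro ζ hζ
      rcases lt_or_gt_of_ne (hnz ζ hζ) with h' | h'
      · exact h'
      · exfalso
        have hcont : ContinuousOn v (Set.Icc ζs ζ) :=
          h1'.continuousOn.mono (fun t ht => le_trans hζs0.le ht.1)
        obtain ⟨t, ht, hvt⟩ := intermediate_value_Icc hζ hcont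
          (show (0:ℝ) ∈ Set.Icc (v ζs) (v ζ) from ⟨hsgn.le, h'.le⟩)
        exact hnz t ht.1 hvt
    have hneg := sol_neg hsol
    have hto := to_zero hm hB hσ hneg hζs0
      (fun ζ hζ => by simpa using by linarith [hvneg ζ hζ])
      (fun ζ hζ => by
        rw [deriv.fun_neg]
        have := hcB ζ hζ (hvneg ζ hζ)
        linarith)
    refine Or.inr (Or.inl ?_)
    have h2 : Tendsto (fun ζ => -(-v ζ)) atTop (nhds (-0)) := hto.neg
    simpa using h2
  · -- v > 0 on the ray
    have hvpos : ∀ ζ, ζs ≤ ζ → 0 < v ζ := by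
      intro ζ hζ
      rcases lt_or_gt_of_ne (hnz ζ hζ) with h' | h'
      · exfalso
        have hcont : ContinuousOn v (Set.Icc ζs ζ) :=
          h1'.continuousOn.mono (fun t ht => le_trans hζs0.le ht.1)
        obtain ⟨t, ht, hvt⟩ := intermediate_value_Icc' hζ hcont
          (show (0:ℝ) ∈ Set.Icc (v ζ) (v ζs) from ⟨h'.le, hsgn.le⟩)
        exact hnz t ht.1 hvt
      · exact h'
    exact Or.inr (Or.inl (to_zero hm hB hσ hsol hζs0 hvpos
      (fun ζ hζ => hcA ζ hζ (hvpos ζ hζ))))
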